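/- Let $f, g \in H^{1/2}(\mathbb{T})$. Then $f\, \partial_x g \in H^{-1}(\mathbb{T})$ with $\|f\,\partial_x g\|_{H^{-1}(\mathbb{T})} \le C\, \|f\|_{H^{1/2}(\mathbb{T})}\, \|g\|_{H^{1/2}(\mathbb{T})}$ for an absolute constant $C>0$. -/

import Mathlib

open Complex MeasureTheory
open scoped ENNReal

/-- Japanese bracket `⟨ξ⟩ = (1 + ξ²)^{1/2}`. -/
noncomputable def jap (ξ : ℤ) : ℝ := Real.sqrt (1 + (ξ : ℝ) ^ 2)

/-- Fourier coefficients of the product `f ∂_x g`, via the convolution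
`(f ∂_x g)^(ξ) = (2π)^{-1/2} ∑_{ξ₁+ξ₂=ξ} f̂(ξ₁) (iξ₂) ĝ(ξ₂)`. -/
noncomputable def prodDx (a b : ℤ → ℂ) (ξ : ℤ) : ℂ :=
  (1 / (Real.sqrt (2 * Real.pi) : ℂ)) *
    ∑' ξ₂ : ℤ, a (ξ - ξ₂) * (Complex.I * (ξ₂ : ℂ)) * b ξ₂


lemma jap_pos (ξ : ℤ) : 0 < jap ξ := Real.sqrt_pos.2 (by positivity)

lemma one_le_jap (ξ : ℤ) : 1 ≤ jap ξ := by
  rw [show (1:ℝ) = Real.sqrt 1 by simp]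
  exact Real.sqrt_le_sqrt (le_add_of_nonneg_right (by positivity))

lemma sq_jap (ξ : ℤ) : jap ξ ^ 2 = 1 + (ξ:ℝ) ^ 2 :=
  Real.sq_sqrt (by positivity)

lemma one_le_sqrt_jap (ξ : ℤ) : 1 ≤ Real.sqrt (jap ξ) := by
  rw [show (1:ℝ) = Real.sqrt 1 by simp]
  exact Real.sqrt_le_sqrt (one_le_jap ξ)

lemma abs_le_jap (ξ : ℤ) : |(ξ:ℝ)| ≤ jap ξ := by
  rw [jap, show |(ξ:ℝ)| = Real.sqrt ((ξ:ℝ)^2) by rw [Real.sqrt_sq_eq_abs]]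
  exact Real.sqrt_le_sqrt (by nlinarith)

/-- `⟨η⟩ ≤ √2 (⟨ξ⟩ + ⟨ξ-η⟩)`. -/
lemma jap_add (ξ η : ℤ) : jap η ≤ Real.sqrt 2 * (jap ξ + jap (ξ - η)) := by
  have h : (1:ℝ) + (η:ℝ)^2 ≤ 2 * (jap ξ + jap (ξ - η))^2 := by
    have h1 := sq_jap ξ; have h2 := sq_jap (ξ - η)
    have h3 := (jap_pos ξ).le; have h4 := (jap_pos (ξ - η)).le
    have h5 : (1:ℝ) + (η:ℝ)^2 ≤ 2 * ((1 + (ξ:ℝ)^2) + (1 + ((ξ-η:ℤ):ℝ)^2)) := by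
      push_cast; nlinarith [sq_nonneg ((ξ:ℝ) + ((ξ:ℝ) - η))]
    nlinarith [mul_nonneg h3 h4]
  calc jap η ≤ Real.sqrt (2 * (jap ξ + jap (ξ - η))^2) := Real.sqrt_le_sqrt h
    _ = Real.sqrt 2 * (jap ξ + jap (ξ - η)) := by
        rw [Real.sqrt_mul (by norm_num), Real.sqrt_sq (add_nonneg (jap_pos ξ).le (jap_pos _).le)]

/-- sqrt-split: `√⟨η⟩ ≤ 2^{1/4} (√⟨ξ⟩ + √⟨ξ-η⟩)`. -/
lemma sqrt_jap_add (ξ η : ℤ) : Real.sqrt (jap η) ≤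
    Real.sqrt (Real.sqrt 2) * (Real.sqrt (jap ξ) + Real.sqrt (jap (ξ - η))) := by
  have h0 : Real.sqrt (jap ξ + jap (ξ - η)) ≤ Real.sqrt (jap ξ) + Real.sqrt (jap (ξ - η)) := by
    have e1 := Real.sq_sqrt (jap_pos ξ).le
    have e2 := Real.sq_sqrt (jap_pos (ξ - η)).le
    rw [show Real.sqrt (jap ξ) + Real.sqrt (jap (ξ-η)) =
        Real.sqrt ((Real.sqrt (jap ξ) + Real.sqrt (jap (ξ-η)))^2) by
      rw [Real.sqrt_sq (by positivity)]]
    apply Real.sqrt_le_sqrt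
    nlinarith [Real.sqrt_nonneg (jap ξ), Real.sqrt_nonneg (jap (ξ - η))]
  calc Real.sqrt (jap η) ≤ Real.sqrt (Real.sqrt 2 * (jap ξ + jap (ξ - η))) :=
        Real.sqrt_le_sqrt (jap_add ξ η)
    _ = Real.sqrt (Real.sqrt 2) * Real.sqrt (jap ξ + jap (ξ - η)) :=
        Real.sqrt_mul (Real.sqrt_nonneg 2) _
    _ ≤ _ := mul_le_mul_of_nonneg_left h0 (Real.sqrt_nonneg _)

lemma key' (c sp sq sr na nb : ℝ) (hsp : 1 ≤ sp) (hsq : 1 ≤ sq) (hsr : 0 ≤ sr)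
    (hna : 0 ≤ na) (hnb : 0 ≤ nb) (hr : sr ≤ c * (sp + sq)) :
    (sp^2)⁻¹ * (na * (sr^2 * nb)) ≤
      c * (((sp^2)⁻¹ + sp⁻¹ * sq⁻¹) * ((sq * na) * (sr * nb))) := by
  have hsp0 : (0:ℝ) < sp := by linarith
  have hsq0 : (0:ℝ) < sq := by linarith
  calc (sp^2)⁻¹ * (na * (sr^2 * nb)) = ((sp^2)⁻¹ * sr * (na * nb)) * sr := by ring
    _ ≤ ((sp^2)⁻¹ * sr * (na * nb)) * (c * (sp + sq)) :=
        mul_le_mul_of_nonneg_left hr (by positivity)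
    _ = c * (((sp^2)⁻¹ + sp⁻¹ * sq⁻¹) * ((sq * na) * (sr * nb))) := by
        field_simp; ring

lemma key2 (c sp sq sr na nb : ℝ) (hsp : 1 ≤ sp) (hsq : 1 ≤ sq) (hsr : 0 ≤ sr)
    (hna : 0 ≤ na) (hnb : 0 ≤ nb) (hc : 0 ≤ c) (hr : sr ≤ c * (sp + sq)) :
    na * (sr^2 * nb) ≤ (2 * c * sp) * ((sq * na) * (sr * nb)) := by
  have h0 : sp + sq ≤ 2 * (sp * sq) := by
    nlinarith [mul_nonneg (sub_nonneg.2 hsp) (sub_nonneg.2 hsq)]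
  have h1 : sr ≤ 2 * c * (sp * sq) := by nlinarith
  nlinarith [mul_le_mul_of_nonneg_right (mul_le_mul_of_nonneg_right h1 hsr)
    (mul_nonneg hna hnb), mul_nonneg hna hnb]

lemma S_summable : Summable (fun ξ : ℤ => ((1:ℝ) + (ξ:ℝ)^2)⁻¹) := by
  have hn : Summable (fun n : ℕ => ((1:ℝ) + (n:ℝ)^2)⁻¹) := by
    have h := (summable_nat_add_iff (f := fun n : ℕ => 1 / (n:ℝ)^2) 1).2
      (by simpa using Real.summable_one_div_nat_pow.2 one_lt_two)
    apply Summable.of_nonneg_of_le (fun n => by positivity) (fun n => ?_) (h.mul_left 2)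
    have h2 : (((n+1:ℕ)):ℝ)^2 ≤ 2 * (1 + (n:ℝ)^2) := by
      push_cast; nlinarith [sq_nonneg ((n:ℝ) - 1)]
    have h3 : ((1:ℝ) + (n:ℝ)^2)⁻¹ ≤ 2 / (((n+1:ℕ):ℝ)^2) := by
      rw [inv_eq_one_div, div_le_div_iff₀ (by positivity) (by positivity)]
      linarith
    calc ((1:ℝ) + (n:ℝ)^2)⁻¹ ≤ 2 / (((n+1:ℕ):ℝ)^2) := h3
      _ = 2 * (1 / ((n+1:ℕ):ℝ)^2) := by ring
  apply hn.of_nat_of_neg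
  exact hn.congr (fun n => by push_cast; ring_nf)

/-- Cauchy–Schwarz for `ℝ≥0∞`-valued sums. -/
lemma ecs (x y : ℤ → ℝ≥0∞) :
    (∑' n, x n * y n) ^ 2 ≤ (∑' n, x n ^ 2) * (∑' n, y n ^ 2) := by
  have hpq : Real.HolderConjugate 2 2 := Real.holderConjugate_iff.mpr ⟨by norm_num, by norm_num⟩
  have hx : AEMeasurable x (Measure.count : Measure ℤ) := (measurable_from_top).aemeasurable
  have hy : AEMeasurable y (Measure.count : Measure ℤ) := (measurable_from_top).aemeasurable
  have H := ENNReal.lintegral_mul_le_Lp_mul_Lq (Measure.count : Measure ℤ) hpq hx hy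
  rw [lintegral_count] at H
  simp only [Pi.mul_apply] at H
  have h2 : ∀ z : ℤ → ℝ≥0∞, (∫⁻ a, z a ^ (2:ℝ) ∂(Measure.count : Measure ℤ))
      = ∑' n, z n ^ 2 := by
    intro z
    rw [lintegral_count]
    congr 1; funext n; rw [← ENNReal.rpow_natCast (z n) 2]; norm_num
  rw [h2 x, h2 y] at H
  calc (∑' n, x n * y n) ^ 2
      ≤ ((∑' n, x n ^ 2) ^ ((1:ℝ)/2) * (∑' n, y n ^ 2) ^ ((1:ℝ)/2)) ^ 2 :=
        pow_le_pow_left' H 2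
    _ = (∑' n, x n ^ 2) * (∑' n, y n ^ 2) := by
        rw [mul_pow, ← ENNReal.rpow_natCast (_ ^ ((1:ℝ)/2)) 2,
          ← ENNReal.rpow_natCast ((∑' n, y n ^ 2) ^ ((1:ℝ)/2)) 2,
          ← ENNReal.rpow_mul, ← ENNReal.rpow_mul]
        norm_num

lemma emul_le_sq_add_sq (x y : ℝ≥0∞) : x * y ≤ x^2 + y^2 := by
  rcases le_total x y with h | h
  · calc x * y ≤ y * y := mul_le_mul_left h y
      _ = y^2 := (sq y).symm
      _ ≤ x^2 + y^2 := le_add_self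
  · calc x * y ≤ x * x := mul_le_mul_right h x
      _ = x^2 := (sq x).symm
      _ ≤ x^2 + y^2 := le_self_add

lemma esq_add_le (x y : ℝ≥0∞) : (x + y)^2 ≤ 3 * (x^2 + y^2) := by
  have h := emul_le_sq_add_sq x y
  calc (x + y)^2 = x^2 + y^2 + (x*y + x*y) := by ring
    _ ≤ x^2 + y^2 + ((x^2+y^2) + (x^2+y^2)) := by gcongr
    _ = 3 * (x^2 + y^2) := by ring

/-- For `f, g ∈ H^{1/2}(𝕋)` (with Fourier coefficients `a, b`), the product
`f ∂_x g` lies in `H^{-1}(𝕋)` with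
`‖f ∂_x g‖_{H^{-1}} ≤ C ‖f‖_{H^{1/2}} ‖g‖_{H^{1/2}}`. -/
theorem stmt16 : ∃ C > 0, ∀ a b : ℤ → ℂ,
    Summable (fun ξ : ℤ => jap ξ * ‖a ξ‖ ^ 2) →
    Summable (fun ξ : ℤ => jap ξ * ‖b ξ‖ ^ 2) →
    (∑' ξ : ℤ, (1 + (ξ : ℝ) ^ 2) ^ (-(1:ℝ)) * ‖prodDx a b ξ‖ ^ 2) ^ ((1:ℝ)/2)
      ≤ C * (∑' ξ : ℤ, jap ξ * ‖a ξ‖ ^ 2) ^ ((1:ℝ)/2)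
          * (∑' ξ : ℤ, jap ξ * ‖b ξ‖ ^ 2) ^ ((1:ℝ)/2) := by
  have hS0 : 0 < ∑' ξ : ℤ, ((1:ℝ) + (ξ:ℝ)^2)⁻¹ := by
    have h1 : ((1:ℝ) + ((0:ℤ):ℝ)^2)⁻¹ ≤ ∑' ξ : ℤ, ((1:ℝ) + (ξ:ℝ)^2)⁻¹ :=
      S_summable.le_tsum 0 (fun j _ => by positivity)
    norm_num at h1; linarith
  set S : ℝ := ∑' ξ : ℤ, ((1:ℝ) + (ξ:ℝ)^2)⁻¹ with hSdef
  refine ⟨(9 * Real.sqrt 2 * S) ^ ((1:ℝ)/2),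
    Real.rpow_pos_of_pos (mul_pos (by positivity) hS0) _, ?_⟩
  intro a b hA hB
  set Na : ℝ := ∑' ξ : ℤ, jap ξ * ‖a ξ‖ ^ 2 with hNadef
  set Nb : ℝ := ∑' ξ : ℤ, jap ξ * ‖b ξ‖ ^ 2 with hNbdef
  have hNa0 : 0 ≤ Na := tsum_nonneg (fun ξ => mul_nonneg (jap_pos ξ).le (by positivity))
  have hNb0 : 0 ≤ Nb := tsum_nonneg (fun ξ => mul_nonneg (jap_pos ξ).le (by positivity))
  -- weighted coefficients
  set A : ℤ → ℝ := fun ξ => Real.sqrt (jap ξ) * ‖a ξ‖ with hAdef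
  set B : ℤ → ℝ := fun ξ => Real.sqrt (jap ξ) * ‖b ξ‖ with hBdef
  have hA0 : ∀ ξ, 0 ≤ A ξ := fun ξ => mul_nonneg (Real.sqrt_nonneg _) (norm_nonneg _)
  have hB0 : ∀ ξ, 0 ≤ B ξ := fun ξ => mul_nonneg (Real.sqrt_nonneg _) (norm_nonneg _)
  have hA2 : Summable (fun ξ => A ξ ^ 2) :=
    hA.congr fun ξ => by rw [hAdef]; rw [mul_pow, Real.sq_sqrt (jap_pos ξ).le]
  have hB2 : Summable (fun ξ => B ξ ^ 2) :=
    hB.congr fun ξ => by rw [hBdef]; rw [mul_pow, Real.sq_sqrt (jap_pos ξ).le]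
  set EA : ℤ → ℝ≥0∞ := fun ξ => ENNReal.ofReal (A ξ) with hEAdef
  set EB : ℤ → ℝ≥0∞ := fun ξ => ENNReal.ofReal (B ξ) with hEBdef
  set w : ℤ → ℝ≥0∞ := fun ξ => ENNReal.ofReal ((jap ξ)⁻¹) with hwdef
  set v : ℤ → ℝ≥0∞ := fun ξ => ENNReal.ofReal ((Real.sqrt (jap ξ))⁻¹) with hvdef
  set cE : ℝ≥0∞ := ENNReal.ofReal (Real.sqrt (Real.sqrt 2)) with hcEdef
  have hEA2 : (∑' ξ, EA ξ ^ 2) = ENNReal.ofReal Na := by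
    have h1 : ∀ ξ, EA ξ ^ 2 = ENNReal.ofReal (jap ξ * ‖a ξ‖ ^ 2) := fun ξ => by
      rw [hEAdef]
      rw [← ENNReal.ofReal_pow (hA0 ξ), hAdef, mul_pow, Real.sq_sqrt (jap_pos ξ).le]
    rw [tsum_congr h1, ← ENNReal.ofReal_tsum_of_nonneg (fun ξ => mul_nonneg (jap_pos ξ).le (by positivity)) hA]
  have hEB2 : (∑' ξ, EB ξ ^ 2) = ENNReal.ofReal Nb := by
    have h1 : ∀ ξ, EB ξ ^ 2 = ENNReal.ofReal (jap ξ * ‖b ξ‖ ^ 2) := fun ξ => by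
      rw [hEBdef]
      rw [← ENNReal.ofReal_pow (hB0 ξ), hBdef, mul_pow, Real.sq_sqrt (jap_pos ξ).le]
    rw [tsum_congr h1, ← ENNReal.ofReal_tsum_of_nonneg (fun ξ => mul_nonneg (jap_pos ξ).le (by positivity)) hB]
  have hv2 : ∀ ξ, v ξ ^ 2 = w ξ := fun ξ => by
    simp only [hvdef, hwdef]
    rw [← ENNReal.ofReal_pow (by positivity), inv_pow, Real.sq_sqrt (jap_pos ξ).le]
  have hES : (∑' ξ, w ξ ^ 2) = ENNReal.ofReal S := by
    have h1 : ∀ ξ, w ξ ^ 2 = ENNReal.ofReal (((1:ℝ) + (ξ:ℝ)^2)⁻¹) := fun ξ => by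
      simp only [hwdef]
      rw [← ENNReal.ofReal_pow (inv_nonneg.2 (jap_pos ξ).le), inv_pow, sq_jap]
    rw [tsum_congr h1, ← ENNReal.ofReal_tsum_of_nonneg (fun ξ => by positivity) S_summable]
  have htrA : ∀ ξ : ℤ, (∑' η, EA (ξ - η) ^ 2) = ENNReal.ofReal Na := fun ξ =>
    ((Equiv.subLeft ξ).tsum_eq (fun z => EA z ^ 2)).trans hEA2
  have htrW : ∀ η : ℤ, (∑' ξ, w (ξ - η) ^ 2) = ENNReal.ofReal S := fun η =>
    ((Equiv.subRight η).tsum_eq (fun z => w z ^ 2)).trans hES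
  -- summability of convolution pieces
  have hA2' : ∀ ξ : ℤ, Summable (fun η => A (ξ - η) ^ 2) := fun ξ => by
    have := (Equiv.subLeft ξ).summable_iff (f := fun z => A z ^ 2)
    exact this.2 hA2
  have hABs : ∀ ξ : ℤ, Summable (fun η => A (ξ - η) * B η) := fun ξ => by
    apply Summable.of_nonneg_of_le (fun η => mul_nonneg (hA0 _) (hB0 _))
      (fun η => ?_) ((hA2' ξ).add hB2)
    nlinarith [sq_nonneg (A (ξ - η) - B η), hA0 (ξ - η), hB0 η]
  -- rewriting the summand norms
  have hterm : ∀ ξ η : ℤ, ‖a (ξ - η) * (Complex.I * (η:ℂ)) * b η‖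
      = ‖a (ξ - η)‖ * (|(η:ℝ)| * ‖b η‖) := by
    intro ξ η
    have h : ‖(η:ℂ)‖ = |(η:ℝ)| := by
      rw [← Complex.ofReal_intCast, Complex.norm_real, Real.norm_eq_abs]
    rw [norm_mul, norm_mul, norm_mul, Complex.norm_I, one_mul, h]
    ring
  have hmaj : ∀ ξ η : ℤ, ‖a (ξ - η)‖ * (|(η:ℝ)| * ‖b η‖)
      ≤ (2 * Real.sqrt (Real.sqrt 2) * Real.sqrt (jap ξ)) * (A (ξ - η) * B η) := by
    intro ξ η
    have h1 : |(η:ℝ)| ≤ (Real.sqrt (jap η)) ^ 2 := by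
      rw [Real.sq_sqrt (jap_pos η).le]; exact abs_le_jap η
    calc ‖a (ξ - η)‖ * (|(η:ℝ)| * ‖b η‖)
        ≤ ‖a (ξ - η)‖ * ((Real.sqrt (jap η)) ^ 2 * ‖b η‖) := by
          gcongr
      _ ≤ (2 * Real.sqrt (Real.sqrt 2) * Real.sqrt (jap ξ)) *
            ((Real.sqrt (jap (ξ - η)) * ‖a (ξ - η)‖) * (Real.sqrt (jap η) * ‖b η‖)) :=
          key2 _ _ _ _ _ _ (one_le_sqrt_jap ξ) (one_le_sqrt_jap (ξ - η))
            (Real.sqrt_nonneg _) (norm_nonneg _) (norm_nonneg _) (Real.sqrt_nonneg _)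
            (sqrt_jap_add ξ η)
      _ = _ := by rw [hAdef, hBdef]
  have hN2 : ∀ ξ : ℤ, Summable (fun η => ‖a (ξ - η)‖ * (|(η:ℝ)| * ‖b η‖)) := fun ξ =>
    Summable.of_nonneg_of_le (fun η => by positivity) (hmaj ξ) ((hABs ξ).mul_left _)
  have hnormP : ∀ ξ : ℤ, ‖prodDx a b ξ‖ ≤ ∑' η, ‖a (ξ - η)‖ * (|(η:ℝ)| * ‖b η‖) := by
    intro ξ
    have hc1 : ‖(1 / (Real.sqrt (2 * Real.pi) : ℂ))‖ ≤ 1 := by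
      rw [norm_div, norm_one, Complex.norm_real, Real.norm_eq_abs,
        _root_.abs_of_nonneg (Real.sqrt_nonneg _)]
      rw [div_le_one (Real.sqrt_pos.2 (by positivity))]
      rw [show (1:ℝ) = Real.sqrt 1 by simp]
      exact Real.sqrt_le_sqrt (by nlinarith [Real.pi_gt_three])
    have hsum : Summable (fun η => ‖a (ξ - η) * (Complex.I * (η:ℂ)) * b η‖) :=
      (hN2 ξ).congr (fun η => (hterm ξ η).symm)
    rw [prodDx, norm_mul]
    calc ‖(1 / (Real.sqrt (2 * Real.pi) : ℂ))‖ * ‖∑' η, a (ξ - η) * (Complex.I * (η:ℂ)) * b η‖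
        ≤ 1 * ‖∑' η, a (ξ - η) * (Complex.I * (η:ℂ)) * b η‖ :=
          mul_le_mul_of_nonneg_right hc1 (norm_nonneg _)
      _ = ‖∑' η, a (ξ - η) * (Complex.I * (η:ℂ)) * b η‖ := one_mul _
      _ ≤ ∑' η, ‖a (ξ - η) * (Complex.I * (η:ℂ)) * b η‖ := norm_tsum_le_tsum_norm hsum
      _ = _ := tsum_congr (hterm ξ)
  -- pointwise termwise ENNReal bound
  have htermE : ∀ ξ η : ℤ,
      ENNReal.ofReal ((jap ξ)⁻¹ * (‖a (ξ - η)‖ * (|(η:ℝ)| * ‖b η‖)))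
        ≤ cE * ((w ξ + v ξ * v (ξ - η)) * (EA (ξ - η) * EB η)) := by
    intro ξ η
    have h1 : (jap ξ)⁻¹ * (‖a (ξ - η)‖ * (|(η:ℝ)| * ‖b η‖))
        ≤ (jap ξ)⁻¹ * (‖a (ξ - η)‖ * ((Real.sqrt (jap η))^2 * ‖b η‖)) := by
      have habs : |(η:ℝ)| ≤ (Real.sqrt (jap η)) ^ 2 := by
        rw [Real.sq_sqrt (jap_pos η).le]; exact abs_le_jap η
      exact mul_le_mul_of_nonneg_left (mul_le_mul_of_nonneg_left
        (mul_le_mul_of_nonneg_right habs (norm_nonneg _)) (norm_nonneg _))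
        (inv_nonneg.2 (jap_pos ξ).le)
    have h2 := key' (Real.sqrt (Real.sqrt 2)) (Real.sqrt (jap ξ)) (Real.sqrt (jap (ξ - η)))
      (Real.sqrt (jap η)) ‖a (ξ - η)‖ ‖b η‖ (one_le_sqrt_jap ξ) (one_le_sqrt_jap (ξ - η))
      (Real.sqrt_nonneg _) (norm_nonneg _) (norm_nonneg _) (sqrt_jap_add ξ η)
    rw [Real.sq_sqrt (jap_pos ξ).le] at h2
    have h3 := h1.trans h2
    calc ENNReal.ofReal ((jap ξ)⁻¹ * (‖a (ξ - η)‖ * (|(η:ℝ)| * ‖b η‖)))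
        ≤ ENNReal.ofReal (Real.sqrt (Real.sqrt 2) *
            (((jap ξ)⁻¹ + (Real.sqrt (jap ξ))⁻¹ * (Real.sqrt (jap (ξ - η)))⁻¹) *
              ((Real.sqrt (jap (ξ - η)) * ‖a (ξ - η)‖) * (Real.sqrt (jap η) * ‖b η‖)))) :=
          ENNReal.ofReal_le_ofReal h3
      _ = cE * ((w ξ + v ξ * v (ξ - η)) * (EA (ξ - η) * EB η)) := by
          rw [hcEdef, hwdef, hvdef, hEAdef, hEBdef, hAdef, hBdef]
          rw [ENNReal.ofReal_mul (Real.sqrt_nonneg _),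
            ENNReal.ofReal_mul (add_nonneg (inv_nonneg.2 (jap_pos ξ).le) (by positivity)),
            ENNReal.ofReal_add (inv_nonneg.2 (jap_pos ξ).le) (by positivity),
            ENNReal.ofReal_mul (by positivity),
            ENNReal.ofReal_mul (by positivity)]
  set P : ℤ → ℝ≥0∞ := fun ξ => ∑' η, EA (ξ - η) * EB η with hPdef
  set Q : ℤ → ℝ≥0∞ := fun ξ => ∑' η, (v (ξ - η) * EA (ξ - η)) * EB η with hQdef
  have hpoint : ∀ ξ : ℤ, ENNReal.ofReal ((jap ξ)⁻¹ * ‖prodDx a b ξ‖)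
      ≤ cE * (w ξ * P ξ + v ξ * Q ξ) := by
    intro ξ
    calc ENNReal.ofReal ((jap ξ)⁻¹ * ‖prodDx a b ξ‖)
        ≤ ENNReal.ofReal ((jap ξ)⁻¹ * ∑' η, ‖a (ξ - η)‖ * (|(η:ℝ)| * ‖b η‖)) :=
          ENNReal.ofReal_le_ofReal
            (mul_le_mul_of_nonneg_left (hnormP ξ) (inv_nonneg.2 (jap_pos ξ).le))
      _ = ENNReal.ofReal (∑' η, (jap ξ)⁻¹ * (‖a (ξ - η)‖ * (|(η:ℝ)| * ‖b η‖))) := by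
          rw [tsum_mul_left]
      _ = ∑' η, ENNReal.ofReal ((jap ξ)⁻¹ * (‖a (ξ - η)‖ * (|(η:ℝ)| * ‖b η‖))) :=
          ENNReal.ofReal_tsum_of_nonneg
            (fun η => mul_nonneg (inv_nonneg.2 (jap_pos ξ).le) (by positivity))
            ((hN2 ξ).mul_left _)
      _ ≤ ∑' η, cE * ((w ξ + v ξ * v (ξ - η)) * (EA (ξ - η) * EB η)) :=
          ENNReal.tsum_le_tsum (fun η => htermE ξ η)
      _ = cE * (w ξ * P ξ + v ξ * Q ξ) := by
          rw [ENNReal.tsum_mul_left]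
          congr 1
          rw [show (fun η => (w ξ + v ξ * v (ξ - η)) * (EA (ξ - η) * EB η))
              = (fun η => w ξ * (EA (ξ - η) * EB η)
                  + v ξ * ((v (ξ - η) * EA (ξ - η)) * EB η)) from funext fun η => by ring]
          rw [ENNReal.tsum_add, ENNReal.tsum_mul_left, ENNReal.tsum_mul_left]
  have hP2 : ∀ ξ : ℤ, P ξ ^ 2 ≤ ENNReal.ofReal Na * ENNReal.ofReal Nb := fun ξ => by
    have h := ecs (fun η => EA (ξ - η)) EB
    rwa [htrA ξ, hEB2] at h
  have hQ2 : ∀ ξ : ℤ, Q ξ ^ 2 ≤ ENNReal.ofReal Na * ∑' η, v (ξ - η) ^ 2 * EB η ^ 2 := by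
    intro ξ
    have h0 : Q ξ = ∑' η, EA (ξ - η) * (v (ξ - η) * EB η) := tsum_congr fun η => by ring
    have h := ecs (fun η => EA (ξ - η)) (fun η => v (ξ - η) * EB η)
    rw [htrA ξ] at h
    rw [h0]
    refine h.trans (le_of_eq ?_)
    congr 1
    exact tsum_congr fun η => mul_pow _ _ _
  have hPsum : (∑' ξ, (w ξ * P ξ) ^ 2)
      ≤ ENNReal.ofReal S * (ENNReal.ofReal Na * ENNReal.ofReal Nb) := by
    calc ∑' ξ, (w ξ * P ξ) ^ 2 = ∑' ξ, w ξ ^ 2 * P ξ ^ 2 :=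
          tsum_congr fun ξ => mul_pow _ _ _
      _ ≤ ∑' ξ, w ξ ^ 2 * (ENNReal.ofReal Na * ENNReal.ofReal Nb) :=
          ENNReal.tsum_le_tsum fun ξ => mul_le_mul_right (hP2 ξ) _
      _ = _ := by rw [ENNReal.tsum_mul_right, hES]
  have hQsum : (∑' ξ, (v ξ * Q ξ) ^ 2)
      ≤ ENNReal.ofReal Na * (2 * ENNReal.ofReal S * ENNReal.ofReal Nb) := by
    calc ∑' ξ, (v ξ * Q ξ) ^ 2 = ∑' ξ, v ξ ^ 2 * Q ξ ^ 2 :=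
          tsum_congr fun ξ => mul_pow _ _ _
      _ ≤ ∑' ξ, v ξ ^ 2 * (ENNReal.ofReal Na * ∑' η, v (ξ - η) ^ 2 * EB η ^ 2) :=
          ENNReal.tsum_le_tsum fun ξ => mul_le_mul_right (hQ2 ξ) _
      _ = ∑' ξ, ENNReal.ofReal Na * ∑' η, v ξ ^ 2 * (v (ξ - η) ^ 2 * EB η ^ 2) :=
          tsum_congr fun ξ => by
            rw [mul_left_comm, ← ENNReal.tsum_mul_left]
      _ = ENNReal.ofReal Na * ∑' ξ, ∑' η, v ξ ^ 2 * (v (ξ - η) ^ 2 * EB η ^ 2) :=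
          ENNReal.tsum_mul_left
      _ = ENNReal.ofReal Na * ∑' η, (∑' ξ, v ξ ^ 2 * v (ξ - η) ^ 2) * EB η ^ 2 := by
          congr 1
          rw [ENNReal.tsum_comm]
          exact tsum_congr fun η => by
            rw [← ENNReal.tsum_mul_right]
            exact tsum_congr fun ξ => by ring
      _ ≤ ENNReal.ofReal Na * ∑' η, (2 * ENNReal.ofReal S) * EB η ^ 2 := by
          refine mul_le_mul_right (ENNReal.tsum_le_tsum fun η => ?_) _
          refine mul_le_mul_left ?_ _
          calc ∑' ξ, v ξ ^ 2 * v (ξ - η) ^ 2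
              ≤ ∑' ξ, ((v ξ ^ 2) ^ 2 + (v (ξ - η) ^ 2) ^ 2) :=
                ENNReal.tsum_le_tsum fun ξ => emul_le_sq_add_sq _ _
            _ = ∑' ξ, (w ξ ^ 2 + w (ξ - η) ^ 2) :=
                tsum_congr fun ξ => by rw [hv2, hv2]
            _ = (∑' ξ, w ξ ^ 2) + ∑' ξ, w (ξ - η) ^ 2 := ENNReal.tsum_add
            _ = 2 * ENNReal.ofReal S := by rw [hES, htrW η]; ring
      _ = ENNReal.ofReal Na * (2 * ENNReal.ofReal S * ENNReal.ofReal Nb) := by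
          rw [ENNReal.tsum_mul_left, hEB2]
  have hmainE : (∑' ξ, ENNReal.ofReal (((jap ξ)⁻¹ * ‖prodDx a b ξ‖) ^ 2))
      ≤ ENNReal.ofReal (9 * Real.sqrt 2 * S * (Na * Nb)) := by
    have hstep : ∀ ξ : ℤ, ENNReal.ofReal (((jap ξ)⁻¹ * ‖prodDx a b ξ‖) ^ 2)
        ≤ cE ^ 2 * (3 * ((w ξ * P ξ) ^ 2 + (v ξ * Q ξ) ^ 2)) := by
      intro ξ
      rw [ENNReal.ofReal_pow (mul_nonneg (inv_nonneg.2 (jap_pos ξ).le) (norm_nonneg _))]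
      calc (ENNReal.ofReal ((jap ξ)⁻¹ * ‖prodDx a b ξ‖)) ^ 2
          ≤ (cE * (w ξ * P ξ + v ξ * Q ξ)) ^ 2 := pow_le_pow_left' (hpoint ξ) 2
        _ = cE ^ 2 * (w ξ * P ξ + v ξ * Q ξ) ^ 2 := mul_pow _ _ _
        _ ≤ cE ^ 2 * (3 * ((w ξ * P ξ) ^ 2 + (v ξ * Q ξ) ^ 2)) :=
            mul_le_mul_right (esq_add_le _ _) _
    calc (∑' ξ, ENNReal.ofReal (((jap ξ)⁻¹ * ‖prodDx a b ξ‖) ^ 2))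
        ≤ ∑' ξ, cE ^ 2 * (3 * ((w ξ * P ξ) ^ 2 + (v ξ * Q ξ) ^ 2)) :=
          ENNReal.tsum_le_tsum hstep
      _ = cE ^ 2 * (3 * ((∑' ξ, (w ξ * P ξ) ^ 2) + ∑' ξ, (v ξ * Q ξ) ^ 2)) := by
          rw [ENNReal.tsum_mul_left, ENNReal.tsum_mul_left, ENNReal.tsum_add]
      _ ≤ cE ^ 2 * (3 * ((ENNReal.ofReal S * (ENNReal.ofReal Na * ENNReal.ofReal Nb))
            + ENNReal.ofReal Na * (2 * ENNReal.ofReal S * ENNReal.ofReal Nb))) :=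
          mul_le_mul_right (mul_le_mul_right (add_le_add hPsum hQsum) _) _
      _ = ENNReal.ofReal (Real.sqrt 2) * (9 *
            (ENNReal.ofReal S * (ENNReal.ofReal Na * ENNReal.ofReal Nb))) := by
          rw [hcEdef, ← ENNReal.ofReal_pow (Real.sqrt_nonneg _),
            Real.sq_sqrt (Real.sqrt_nonneg 2)]
          ring
      _ = ENNReal.ofReal (9 * Real.sqrt 2 * S * (Na * Nb)) := by
          rw [show (9:ℝ≥0∞) = ENNReal.ofReal (9:ℝ) from (ENNReal.ofReal_ofNat 9).symm,
            ← ENNReal.ofReal_mul hNa0, ← ENNReal.ofReal_mul hS0.le,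
            ← ENNReal.ofReal_mul (by norm_num), ← ENNReal.ofReal_mul (Real.sqrt_nonneg 2)]
          congr 1
          ring
  have hgt : ∀ ξ : ℤ, (1 + (ξ:ℝ) ^ 2) ^ (-(1:ℝ)) * ‖prodDx a b ξ‖ ^ 2
      = ((jap ξ)⁻¹ * ‖prodDx a b ξ‖) ^ 2 := by
    intro ξ
    rw [mul_pow, inv_pow, sq_jap, show (-(1:ℝ)) = ((-1:ℤ):ℝ) by norm_num,
      Real.rpow_intCast, zpow_neg_one]
  have hRHS0 : (0:ℝ) ≤ 9 * Real.sqrt 2 * S * (Na * Nb) :=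
    mul_nonneg (mul_nonneg (by positivity) hS0.le) (mul_nonneg hNa0 hNb0)
  have hLD : (∑' ξ, ((jap ξ)⁻¹ * ‖prodDx a b ξ‖) ^ 2) ≤ 9 * Real.sqrt 2 * S * (Na * Nb) := by
    by_cases hs : Summable (fun ξ => ((jap ξ)⁻¹ * ‖prodDx a b ξ‖) ^ 2)
    · rw [← ENNReal.ofReal_le_ofReal_iff hRHS0,
        ENNReal.ofReal_tsum_of_nonneg (fun ξ => sq_nonneg _) hs]
      exact hmainE
    · rw [tsum_eq_zero_of_not_summable hs]; exact hRHS0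
  calc (∑' ξ : ℤ, (1 + (ξ:ℝ) ^ 2) ^ (-(1:ℝ)) * ‖prodDx a b ξ‖ ^ 2) ^ ((1:ℝ)/2)
      = (∑' ξ, ((jap ξ)⁻¹ * ‖prodDx a b ξ‖) ^ 2) ^ ((1:ℝ)/2) := by
        rw [tsum_congr hgt]
    _ ≤ (9 * Real.sqrt 2 * S * (Na * Nb)) ^ ((1:ℝ)/2) :=
        Real.rpow_le_rpow (tsum_nonneg fun ξ => sq_nonneg _) hLD (by norm_num)
    _ = (9 * Real.sqrt 2 * S) ^ ((1:ℝ)/2) * Na ^ ((1:ℝ)/2) * Nb ^ ((1:ℝ)/2) := by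
        rw [Real.mul_rpow (mul_nonneg (by positivity) hS0.le) (mul_nonneg hNa0 hNb0),
          Real.mul_rpow hNa0 hNb0, ← mul_assoc]
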